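/- There are absolute positive constants b, c and C such that for all sufficiently large n and every positive real p ≤ c satisfying np ≥ C·log₂ n, the following holds: for every integer m with pn/16 ≤ m ≤ pn/4, Σ_{d | m, 2 ≤ d ≤ √m} C(n,d)·C(n−d, m/d)·p^m ≤ 2^{−b·m·log₂(1/p)}. -/

import Mathlib

open MeasureTheory ProbabilityTheory Filter Real

namespace RandomBipartiteDecomposition

/-- The set of edges of the complete bipartite graph with vertex classes `A` and `B`. -/
def bicliqueEdges {V : Type*} (A B : Finset V) : Set (Sym2 V) :=
  {e | ∃ a ∈ A, ∃ b ∈ B, e = s(a, b)}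

/-- `A`, `B` are the vertex classes of a complete bipartite subgraph of `G`. -/
def IsBicliqueIn {V : Type*} (G : SimpleGraph V) (A B : Finset V) : Prop :=
  A.Nonempty ∧ B.Nonempty ∧ Disjoint A B ∧ ∀ a ∈ A, ∀ b ∈ B, G.Adj a b

/-- A complete bipartite subgraph is nontrivial if both classes have at least 2 vertices. -/
def IsNontrivialBicliqueIn {V : Type*} (G : SimpleGraph V) (A B : Finset V) : Prop :=
  2 ≤ A.card ∧ 2 ≤ B.card ∧ Disjoint A B ∧ ∀ a ∈ A, ∀ b ∈ B, G.Adj a b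

/-- `P` lists `m` pairwise edge-disjoint complete bipartite subgraphs of `G` such that
every edge of `G` belongs to exactly one of them. -/
def IsBicliqueDecomp {V : Type*} (G : SimpleGraph V) (m : ℕ)
    (P : Fin m → Finset V × Finset V) : Prop :=
  (∀ i, IsBicliqueIn G (P i).1 (P i).2) ∧
  (∀ i j, i ≠ j →
    Disjoint (bicliqueEdges (P i).1 (P i).2) (bicliqueEdges (P j).1 (P j).2)) ∧
  (⋃ i, bicliqueEdges (P i).1 (P i).2) = G.edgeSet

/-- As above but with all complete bipartite subgraphs nontrivial. -/
def IsNontrivialBicliqueDecomp {V : Type*} (G : SimpleGraph V) (m : ℕ)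
    (P : Fin m → Finset V × Finset V) : Prop :=
  (∀ i, IsNontrivialBicliqueIn G (P i).1 (P i).2) ∧
  (∀ i j, i ≠ j →
    Disjoint (bicliqueEdges (P i).1 (P i).2) (bicliqueEdges (P j).1 (P j).2)) ∧
  (⋃ i, bicliqueEdges (P i).1 (P i).2) = G.edgeSet

/-- `τ(G)`: the minimum number of pairwise edge-disjoint complete bipartite subgraphs
of `G` so that each edge of `G` belongs to exactly one of them. -/
noncomputable def tau {V : Type*} (G : SimpleGraph V) : ℕ :=
  sInf {m | ∃ P : Fin m → Finset V × Finset V, IsBicliqueDecomp G m P}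

/-- `τ'(G)`: the minimum number of pairwise edge-disjoint *nontrivial* complete bipartite
subgraphs of `G` covering all edges of `G`; `⊤` if there is no such cover. -/
noncomputable def tau' {V : Type*} (G : SimpleGraph V) : ℕ∞ :=
  sInf {t : ℕ∞ | ∃ m : ℕ, t = m ∧ ∃ P : Fin m → Finset V × Finset V,
    IsNontrivialBicliqueDecomp G m P}

/-- `S` is an independent set of `G`. -/
def IsIndepFinset {V : Type*} (G : SimpleGraph V) (S : Finset V) : Prop :=
  ∀ a ∈ S, ∀ b ∈ S, ¬ G.Adj a b

/-- `α(G)`: the maximum size of an independent set of `G`. -/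
noncomputable def alpha {V : Type*} (G : SimpleGraph V) : ℕ :=
  sSup {k | ∃ S : Finset V, S.card = k ∧ IsIndepFinset G S}

/-- `S` induces in `G` a complete bipartite graph with nonempty vertex classes `A`, `B`. -/
def IsInducedCompleteBipartite {V : Type*} (G : SimpleGraph V) (S A B : Finset V) : Prop :=
  A.Nonempty ∧ B.Nonempty ∧ Disjoint A B ∧ (A : Set V) ∪ (B : Set V) = (S : Set V) ∧
  ∀ u ∈ S, ∀ v ∈ S, (G.Adj u v ↔ ((u ∈ A ∧ v ∈ B) ∨ (u ∈ B ∧ v ∈ A)))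

/-- `β(G)`: the largest number of vertices of an induced complete bipartite subgraph. -/
noncomputable def beta {V : Type*} (G : SimpleGraph V) : ℕ :=
  sSup {k | ∃ S A B : Finset V, IsInducedCompleteBipartite G S A B ∧ S.card = k}

/-- The Bernoulli measure on `Bool` giving `true` probability `p`. -/
noncomputable def bernoulliBool (p : ℝ) : Measure Bool :=
  p.toNNReal • Measure.dirac true + (1 - p).toNNReal • Measure.dirac false

instance (p : ℝ) : IsFiniteMeasure (bernoulliBool p) := by
  unfold bernoulliBool; infer_instance

/-- The Erdős–Rényi random graph `G(n,p)`: each unordered pair of vertices flips an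
independent `p`-coin. Events about the graph are subsets of the coin-flip space. -/
noncomputable def erdosRenyi (n : ℕ) (p : ℝ) : Measure (Sym2 (Fin n) → Bool) :=
  Measure.pi fun _ => bernoulliBool p

/-- The simple graph determined by the coin flips `ω`. -/
def graphOf (n : ℕ) (ω : Sym2 (Fin n) → Bool) : SimpleGraph (Fin n) :=
  SimpleGraph.fromEdgeSet {e | ω e = true}

/-- `f(k) = C(n,k) · 2^{-C(k,2)}`, the expected number of independent sets of size `k`
in `G(n,1/2)`. -/
noncomputable def f (n k : ℕ) : ℝ :=
  (n.choose k : ℝ) * (2 : ℝ) ^ (-(k.choose 2 : ℤ))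

/-- `k₀(n)`: the largest `k` with `f(k) ≥ 1`. -/
noncomputable def k0 (n : ℕ) : ℕ := sSup {k | 1 ≤ f n k}

/-- `g(k) = C(n,k+2) · (2^{k+1} - 1) · 2^{-C(k+2,2)}`, the expected number of induced
complete bipartite subgraphs on `k+2` vertices in `G(n,1/2)`. -/
noncomputable def g (n k : ℕ) : ℝ :=
  (n.choose (k + 2) : ℝ) * ((2 : ℝ) ^ (k + 1) - 1) * (2 : ℝ) ^ (-((k + 2).choose 2 : ℤ))

/-- The number of independent sets of size `k` in the graph determined by `ω`. -/
noncomputable def numIndep (n k : ℕ) (ω : Sym2 (Fin n) → Bool) : ℕ :=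
  Set.ncard {S : Finset (Fin n) | S.card = k ∧ IsIndepFinset (graphOf n ω) S}

/-- The number of `m`-element vertex subsets inducing a complete bipartite graph in the
graph determined by `ω`. -/
noncomputable def numBip (n m : ℕ) (ω : Sym2 (Fin n) → Bool) : ℕ :=
  Set.ncard {S : Finset (Fin n) | S.card = m ∧
    ∃ A B : Finset (Fin n), IsInducedCompleteBipartite (graphOf n ω) S A B}

lemma aux_pow_le (k : ℕ) : (k : ℝ) ^ k ≤ 3 ^ k * k.factorial := by
  induction k with
  | zero => simp
  | succ k ih =>
    rcases Nat.eq_zero_or_pos k with hk | hk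
    · subst hk; norm_num
    have hk0 : (0:ℝ) < k := by exact_mod_cast hk
    have h1 : ((k:ℝ)+1)^k ≤ 3 * (k:ℝ)^k := by
      have h2 : ((k:ℝ)+1)^k = (k:ℝ)^k * (1 + 1/k)^k := by
        rw [← mul_pow]; congr 1; field_simp
      have h3 : (1 + 1/(k:ℝ))^k ≤ Real.exp (1/k) ^ k := by
        apply pow_le_pow_left₀ (by positivity)
        · have := Real.add_one_le_exp (1/(k:ℝ)); linarith
      have h4 : Real.exp (1/(k:ℝ)) ^ k = Real.exp (k * (1/k)) := (Real.exp_nat_mul _ k).symm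
      have h5 : (k:ℝ) * (1/k) = 1 := by field_simp
      have h6 : Real.exp 1 ≤ 3 := by
        have := Real.exp_one_lt_d9; linarith
      rw [h5] at h4
      have h7 : (1 + 1/(k:ℝ))^k ≤ 3 := by rw [h4] at h3; linarith
      calc ((k:ℝ)+1)^k = (k:ℝ)^k * (1+1/k)^k := h2
        _ ≤ (k:ℝ)^k * 3 := by
            apply mul_le_mul_of_nonneg_left h7 (by positivity)
        _ = 3 * (k:ℝ)^k := by ring
    have hfac : (k:ℕ).succ.factorial = (k+1) * k.factorial := rfl
    push_cast [Nat.factorial_succ]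
    calc ((k:ℝ)+1)^(k+1) = ((k:ℝ)+1) * ((k:ℝ)+1)^k := by ring
      _ ≤ ((k:ℝ)+1) * (3 * (k:ℝ)^k) := by
          apply mul_le_mul_of_nonneg_left h1 (by positivity)
      _ ≤ ((k:ℝ)+1) * (3 * (3^k * k.factorial)) := by
          apply mul_le_mul_of_nonneg_left _ (by positivity)
          apply mul_le_mul_of_nonneg_left ih (by norm_num)
      _ = 3^(k+1) * (((k:ℝ)+1) * k.factorial) := by ring

lemma aux_logb_le_sqrt {x : ℝ} (hx : 1296 ≤ x) : Real.logb 2 x ≤ Real.sqrt x := by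
  have hx0 : (0:ℝ) < x := by linarith
  have h1 : Real.log x ≤ x ^ (1/4:ℝ) / (1/4) := Real.log_le_rpow_div hx0.le (by norm_num)
  have h1' : Real.log x ≤ 4 * x ^ (1/4:ℝ) := by linarith
  have hlog2 : (2/3 : ℝ) ≤ Real.log 2 := by have := Real.log_two_gt_d9; linarith
  have h6 : (6:ℝ) ≤ x ^ (1/4:ℝ) := by
    have h60 : ((1296:ℝ)) ^ ((1:ℝ)/4) ≤ x ^ ((1:ℝ)/4) :=
      Real.rpow_le_rpow (by norm_num) hx (by norm_num)
    have : ((1296:ℝ)) ^ ((1:ℝ)/4) = 6 := by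
      rw [show (1296:ℝ) = (6:ℝ)^(4:ℕ) by norm_num, ← Real.rpow_natCast 6 4,
        ← Real.rpow_mul (by norm_num)]
      norm_num
    linarith
  have h2 : Real.logb 2 x ≤ 6 * x ^ (1/4:ℝ) := by
    rw [Real.logb, div_le_iff₀ (by linarith : (0:ℝ) < Real.log 2)]
    nlinarith [Real.rpow_nonneg hx0.le (1/4:ℝ)]
  have hs : x ^ (1/4:ℝ) * x ^ (1/4:ℝ) = Real.sqrt x := by
    rw [← Real.rpow_add hx0, Real.sqrt_eq_rpow]; norm_num
  nlinarith

set_option maxHeartbeats 2000000 in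
/-- Lemma 3.1: for suitable absolute constants `b, c, C`, for large `n`,
`p ≤ c` with `np ≥ C log₂ n`, and `pn/16 ≤ m ≤ pn/4`,
`Σ_{d | m, 2 ≤ d ≤ √m} C(n,d)·C(n-d,m/d)·p^m ≤ 2^{-b·m·log₂(1/p)}`. -/
theorem divisor_sum_bound :
    ∃ b c C : ℝ, 0 < b ∧ 0 < c ∧ 0 < C ∧ ∃ N : ℕ, ∀ n : ℕ, N ≤ n →
      ∀ p : ℝ, 0 < p → p ≤ c → C * Real.logb 2 n ≤ n * p →
      ∀ m : ℕ, p * n / 16 ≤ (m : ℝ) → (m : ℝ) ≤ p * n / 4 →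
      ∑ d ∈ m.divisors.filter (fun d => 2 ≤ d ∧ d ^ 2 ≤ m),
          (n.choose d : ℝ) * ((n - d).choose (m / d) : ℝ) * p ^ m ≤
        (2 : ℝ) ^ (-(b * m * Real.logb 2 (1 / p))) := by
  refine ⟨1/8, ((2:ℝ)^(100:ℕ))⁻¹, 16, by norm_num, by positivity, by norm_num, 2^20000, ?_⟩
  intro n hn p hp hpc hC m hm1 hm2
  have hp1 : p ≤ 1 := by
    refine hpc.trans ?_
    rw [inv_le_one_iff₀]; right; norm_num
  -- basic size facts
  have hnR : ((2:ℝ)^(20000:ℕ)) ≤ (n:ℝ) := by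
    have h1 : (((2:ℕ)^(20000:ℕ) : ℕ):ℝ) ≤ (n:ℝ) := Nat.cast_le.mpr hn
    rwa [Nat.cast_pow, Nat.cast_ofNat] at h1
  have hn0 : (0:ℝ) < n := lt_of_lt_of_le (by positivity) hnR
  have hlogn : (20000:ℝ) ≤ Real.logb 2 n := by
    have h := Real.logb_le_logb_of_le (by norm_num : (1:ℝ) < 2)
      (by positivity : (0:ℝ) < (2:ℝ)^(20000:ℕ)) hnR
    rw [Real.logb_pow, Real.logb_self_eq_one (by norm_num)] at h
    norm_num at h
    linarith
  have hmlog : Real.logb 2 n ≤ (m:ℝ) := by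
    have h1 : 16 * Real.logb 2 n ≤ n * p := hC
    linarith
  have hm20000 : (20000:ℝ) ≤ (m:ℝ) := le_trans hlogn hmlog
  have hm0 : 0 < m := by
    by_contra h
    push_neg at h
    interval_cases m <;> norm_num at hm20000
  have hmR : (1296:ℝ) ≤ (m:ℝ) := by linarith
  have hpn : p * n ≤ 16 * m := by linarith
  clear hn hnR hlogn hmlog hm20000
  -- per-term bound
  set U : ℝ := (2:ℝ) ^ ((7:ℝ)*m) * p ^ ((3:ℝ)*m/8) with hU
  have key : ∀ d ∈ m.divisors.filter (fun d => 2 ≤ d ∧ d ^ 2 ≤ m),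
      (n.choose d : ℝ) * ((n - d).choose (m / d) : ℝ) * p ^ m ≤ U := by
    intro d hd
    simp only [Finset.mem_filter, Nat.mem_divisors] at hd
    obtain ⟨⟨hdvd, hmne⟩, hd2, hdsq⟩ := hd
    set k := m / d with hkdef
    have hdk : d * k = m := Nat.mul_div_cancel' hdvd
    have hd0 : 0 < d := by omega
    have hdlek : d ≤ k := by
      have h' : d * d ≤ d * k := by rw [hdk, ← pow_two]; exact hdsq
      exact Nat.le_of_mul_le_mul_left h' hd0
    have hk2 : 2 ≤ k := le_trans hd2 hdlek
    have hdR : (2:ℝ) ≤ (d:ℝ) := by exact_mod_cast hd2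
    have hkR : (2:ℝ) ≤ (k:ℝ) := by exact_mod_cast hk2
    have hmdk : (m:ℝ) = (d:ℝ) * k := by exact_mod_cast hdk.symm
    have hdkm : d + k ≤ m := by
      have : ((d:ℝ) + k) ≤ m := by nlinarith
      exact_mod_cast this
    set e := m - (d + k) with hedef
    have heq : d + (k + e) = m := by omega
    have heR : (e:ℝ) = (m:ℝ) - d - k := by
      have : (e:ℕ) = m - (d+k) := rfl
      push_cast [hedef, Nat.cast_sub hdkm]; ring
    -- geometric facts
    have hsqrt : (d:ℝ) ≤ Real.sqrt m := by
      rw [Real.le_sqrt (by positivity) (by positivity)]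
      exact_mod_cast hdsq
    have hsqm : Real.sqrt m * Real.sqrt m = (m:ℝ) := Real.mul_self_sqrt (by positivity)
    have h8s : (8:ℝ) ≤ Real.sqrt m := by
      rw [Real.le_sqrt (by norm_num) (by positivity)]; nlinarith
    have hdm8 : (d:ℝ) ≤ (m:ℝ)/8 := by nlinarith [Real.sqrt_nonneg (m:ℝ)]
    have hkm2 : (k:ℝ) ≤ (m:ℝ)/2 := by nlinarith
    have he38 : (3:ℝ)*m/8 ≤ (e:ℝ) := by rw [heR]; linarith
    have h2d : 2*(d:ℝ) ≤ (m:ℝ) := by linarith [hdm8, hmR]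
    have h2k : 2*(k:ℝ) ≤ (m:ℝ) := by linarith [hkm2]
    have h48 : 3*(n:ℝ)*p ≤ 48*((d:ℝ)*(k:ℝ)) := by linarith [hpn, hmdk]
    -- choose bounds
    have hc1 : (n.choose d : ℝ) ≤ (n:ℝ)^d := by exact_mod_cast Nat.choose_le_pow n d
    have hkk0 : (0:ℝ) < (k:ℝ)^k := by positivity
    have hfacpos : (0:ℝ) < (k.factorial : ℝ) := by exact_mod_cast k.factorial_pos
    have hc2 : ((n - d).choose k : ℝ) ≤ 3^k * (n:ℝ)^k / (k:ℝ)^k := by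
      have h1 : ((n-d).choose k : ℝ) ≤ (n.choose k : ℝ) := by
        exact_mod_cast Nat.choose_le_choose k (Nat.sub_le n d)
      have h2 : (n.choose k : ℝ) ≤ (n:ℝ)^k / (k.factorial : ℝ) := by
        have := Nat.choose_le_pow_div (α := ℝ) k n
        push_cast at this ⊢
        convert this using 2
      have h3 : (n:ℝ)^k / (k.factorial:ℝ) ≤ 3^k * (n:ℝ)^k / (k:ℝ)^k := by
        rw [div_le_div_iff₀ hfacpos hkk0]
        calc (n:ℝ)^k * (k:ℝ)^k ≤ (n:ℝ)^k * (3^k * k.factorial) := by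
              apply mul_le_mul_of_nonneg_left (aux_pow_le k) (by positivity)
          _ = 3^k * (n:ℝ)^k * k.factorial := by ring
      linarith
    -- combine:
    have hT : (n.choose d : ℝ) * ((n - d).choose k : ℝ) * p ^ m
        ≤ ((n:ℝ)*p)^d * ((3*(n:ℝ)*p)/k)^k * p^e := by
      have hstep : (n.choose d : ℝ) * ((n - d).choose k : ℝ) * p ^ m
          ≤ (n:ℝ)^d * (3^k * (n:ℝ)^k / (k:ℝ)^k) * p^m := by
        apply mul_le_mul_of_nonneg_right _ (by positivity)
        apply mul_le_mul hc1 hc2 (by positivity) (by positivity)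
      have hEq : (n:ℝ)^d * (3^k * (n:ℝ)^k / (k:ℝ)^k) * p^m
          = ((n:ℝ)*p)^d * ((3*(n:ℝ)*p)/k)^k * p^e := by
        rw [← heq, pow_add, pow_add]
        ring
      rw [hEq] at hstep
      exact hstep
    have hb1 : ((n:ℝ)*p)^d ≤ (16*(m:ℝ))^d := by
      apply pow_le_pow_left₀ (by positivity)
      linarith [hpn]
    have hb2 : ((3*(n:ℝ)*p)/k)^k ≤ (48*(d:ℝ))^k := by
      apply pow_le_pow_left₀ (by positivity)
      rw [div_le_iff₀ (by positivity : (0:ℝ) < (k:ℝ))]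
      linarith [h48]
    -- (16m)^d ≤ 2^(3m)
    have hA : (16*(m:ℝ))^d ≤ (2:ℝ) ^ ((3:ℝ)*m) := by
      have h16 : ((16:ℝ))^d ≤ (2:ℝ)^((2:ℝ)*m) := by
        have h1 : ((16:ℝ))^d = (2:ℝ)^((4*d:ℕ)) := by rw [pow_mul]; norm_num
        rw [h1, ← Real.rpow_natCast 2 (4*d)]
        apply Real.rpow_le_rpow_of_exponent_le one_le_two
        push_cast; linarith [h2d]
      have hmd : ((m:ℝ))^d ≤ (2:ℝ)^((m:ℝ)) := by
        have hm2' : (2:ℝ)^(Real.logb 2 (m:ℝ)) = (m:ℝ) :=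
          Real.rpow_logb (by norm_num) (by norm_num) (by positivity)
        calc ((m:ℝ))^d = ((2:ℝ)^(Real.logb 2 (m:ℝ)))^d := by rw [hm2']
          _ = (2:ℝ)^(Real.logb 2 (m:ℝ) * d) := by
              rw [← Real.rpow_natCast ((2:ℝ)^(Real.logb 2 (m:ℝ))) d,
                ← Real.rpow_mul (by norm_num)]
          _ ≤ (2:ℝ)^((m:ℝ)) := by
              apply Real.rpow_le_rpow_of_exponent_le one_le_two
              calc Real.logb 2 (m:ℝ) * d ≤ Real.sqrt m * Real.sqrt m := by
                    apply mul_le_mul (aux_logb_le_sqrt hmR) hsqrt (by positivity)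
                      (Real.sqrt_nonneg _)
                _ = (m:ℝ) := hsqm
      calc (16*(m:ℝ))^d = 16^d * (m:ℝ)^d := mul_pow _ _ _
        _ ≤ (2:ℝ)^((2:ℝ)*m) * (2:ℝ)^((m:ℝ)) := by
            apply mul_le_mul h16 hmd (by positivity) (by positivity)
        _ = (2:ℝ)^((3:ℝ)*m) := by rw [← Real.rpow_add (by norm_num : (0:ℝ)<2)]; ring_nf
    -- (48d)^k ≤ 2^(4m)
    have hB : (48*(d:ℝ))^k ≤ (2:ℝ) ^ ((4:ℝ)*m) := by
      have hnat : (48*d)^k ≤ 2^(6*k + d*k) := by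
        calc (48*d)^k = 48^k * d^k := mul_pow _ _ _
          _ ≤ 64^k * (2^d)^k := Nat.mul_le_mul (Nat.pow_le_pow_left (by norm_num) k)
              (Nat.pow_le_pow_left (Nat.lt_two_pow_self (n := d)).le k)
          _ = 2^(6*k + d*k) := by
              rw [show (64:ℕ) = 2^6 by norm_num, ← pow_mul, ← pow_mul, ← pow_add]
      have hcast : ((48:ℝ)*(d:ℝ))^k ≤ ((2:ℝ))^((6*k + d*k : ℕ)) := by exact_mod_cast hnat
      refine hcast.trans ?_
      rw [← Real.rpow_natCast 2 (6*k + d*k)]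
      apply Real.rpow_le_rpow_of_exponent_le one_le_two
      push_cast; linarith [h2k, hmdk]
    -- p^e ≤ p^{3m/8}
    have hpe : p^e ≤ p ^ ((3:ℝ)*m/8) := by
      rw [← Real.rpow_natCast p e]
      exact Real.rpow_le_rpow_of_exponent_ge hp hp1 he38
    calc (n.choose d : ℝ) * ((n - d).choose k : ℝ) * p ^ m
        ≤ ((n:ℝ)*p)^d * ((3*(n:ℝ)*p)/k)^k * p^e := hT
      _ ≤ (16*(m:ℝ))^d * (48*(d:ℝ))^k * p^e := by
          apply mul_le_mul_of_nonneg_right _ (by positivity)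
          apply mul_le_mul hb1 hb2 (by positivity) (by positivity)
      _ ≤ ((2:ℝ)^((3:ℝ)*m) * (2:ℝ)^((4:ℝ)*m)) * p^(e:ℕ) := by
          apply mul_le_mul_of_nonneg_right _ (by positivity)
          apply mul_le_mul hA hB (by positivity) (by positivity)
      _ ≤ ((2:ℝ)^((3:ℝ)*m) * (2:ℝ)^((4:ℝ)*m)) * p^((3:ℝ)*m/8) := by
          apply mul_le_mul_of_nonneg_left hpe (by positivity)
      _ = U := by rw [hU, ← Real.rpow_add (by norm_num : (0:ℝ)<2)]; ring_nf
  -- sum up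
  have hcard : (m.divisors.filter (fun d => 2 ≤ d ∧ d ^ 2 ≤ m)).card ≤ m := by
    have hsub : m.divisors ⊆ Finset.Icc 1 m := fun x hx =>
      Finset.mem_Icc.mpr ⟨Nat.pos_of_mem_divisors hx, Nat.divisor_le hx⟩
    refine le_trans (Finset.card_le_card (Finset.filter_subset _ _)) ?_
    refine le_trans (Finset.card_le_card hsub) ?_
    simp [Nat.card_Icc]
  have hsum : ∑ d ∈ m.divisors.filter (fun d => 2 ≤ d ∧ d ^ 2 ≤ m),
      (n.choose d : ℝ) * ((n - d).choose (m / d) : ℝ) * p ^ m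
      ≤ (m:ℝ) * U := by
    have h := Finset.sum_le_card_nsmul _ _ U key
    rw [nsmul_eq_mul] at h
    refine h.trans ?_
    apply mul_le_mul_of_nonneg_right _ (by positivity)
    exact_mod_cast hcard
  -- RHS rewrite
  have hRHS : (2 : ℝ) ^ (-((1:ℝ)/8 * m * Real.logb 2 (1 / p))) = p ^ ((m:ℝ)/8) := by
    rw [show (1:ℝ)/p = p⁻¹ from one_div p, Real.logb_inv]
    rw [show -((1:ℝ)/8 * m * -Real.logb 2 p) = Real.logb 2 p * ((m:ℝ)/8) by ring]
    rw [Real.rpow_mul (by norm_num : (0:ℝ) ≤ 2), Real.rpow_logb (by norm_num) (by norm_num) hp]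
  rw [hRHS]
  refine hsum.trans ?_
  -- m * U ≤ p^{m/8}
  have hmlt : (m:ℝ) ≤ (2:ℝ)^((m:ℝ)) := by
    have := (Nat.lt_two_pow_self (n := m)).le
    have h2 : (m:ℝ) ≤ ((2:ℕ)^m : ℕ) := by exact_mod_cast this
    refine h2.trans ?_
    push_cast
    rw [← Real.rpow_natCast 2 m]
  have hstep1 : (m:ℝ) * U ≤ (2:ℝ)^((8:ℝ)*m) * p ^ ((3:ℝ)*m/8) := by
    rw [hU]
    calc (m:ℝ) * ((2:ℝ)^((7:ℝ)*m) * p ^ ((3:ℝ)*m/8))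
        ≤ (2:ℝ)^((m:ℝ)) * ((2:ℝ)^((7:ℝ)*m) * p ^ ((3:ℝ)*m/8)) := by
          apply mul_le_mul_of_nonneg_right hmlt (by positivity)
      _ = (2:ℝ)^((8:ℝ)*m) * p ^ ((3:ℝ)*m/8) := by
          rw [← mul_assoc, ← Real.rpow_add (by norm_num : (0:ℝ)<2)]; ring_nf
  refine hstep1.trans ?_
  -- 2^{8m} p^{3m/8} ≤ p^{m/8}
  have hsplit : p ^ ((3:ℝ)*m/8) = p ^ ((m:ℝ)/8) * p ^ ((m:ℝ)/4) := by
    rw [← Real.rpow_add hp]; ring_nf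
  rw [hsplit]
  have hfin : (2:ℝ)^((8:ℝ)*m) * p ^ ((m:ℝ)/4) ≤ 1 := by
    have hpb : p ^ ((m:ℝ)/4) ≤ (((2:ℝ)^(100:ℕ))⁻¹) ^ ((m:ℝ)/4) :=
      Real.rpow_le_rpow hp.le hpc (by positivity)
    have hinv : (((2:ℝ)^(100:ℕ))⁻¹) ^ ((m:ℝ)/4) = (2:ℝ)^(-(25:ℝ)*m) := by
      rw [← Real.rpow_natCast 2 100, ← Real.rpow_neg (by norm_num : (0:ℝ) ≤ 2),
        ← Real.rpow_mul (by norm_num : (0:ℝ) ≤ 2)]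
      norm_num
      ring_nf
    calc (2:ℝ)^((8:ℝ)*m) * p ^ ((m:ℝ)/4)
        ≤ (2:ℝ)^((8:ℝ)*m) * (2:ℝ)^(-(25:ℝ)*m) := by
          rw [← hinv]; exact mul_le_mul_of_nonneg_left hpb (by positivity)
      _ = (2:ℝ)^(-(17:ℝ)*m) := by rw [← Real.rpow_add (by norm_num : (0:ℝ)<2)]; ring_nf
      _ ≤ 1 := by
          apply Real.rpow_le_one_of_one_le_of_nonpos one_le_two
          have : (0:ℝ) ≤ m := by positivity
          linarith
  calc (2:ℝ)^((8:ℝ)*m) * (p ^ ((m:ℝ)/8) * p ^ ((m:ℝ)/4))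
      = p ^ ((m:ℝ)/8) * ((2:ℝ)^((8:ℝ)*m) * p ^ ((m:ℝ)/4)) := by ring
    _ ≤ p ^ ((m:ℝ)/8) * 1 := mul_le_mul_of_nonneg_left hfin (by positivity)
    _ = p ^ ((m:ℝ)/8) := mul_one _

end RandomBipartiteDecomposition
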